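/- Let A = (a_{ij}) be a D×D real matrix with a_{ij} > 0 for all i, j. Then the projective diameter Δ(A) := sup{d_H(A·u, A·v) : u, v ∈ ℝ^D with all entries strictly positive} is finite and is given by Δ(A) = max{ log( (a_{ij} a_{pq}) / (a_{iq} a_{pj}) ) : 1 ≤ i, j, p, q ≤ D }. -/
import Mathlib

/-- The Hilbert projective metric on the interior of the positive orthant of `ℝ^D`:
`d_H(x,y) = log ((max_i x_i/y_i) / (min_i x_i/y_i))`. -/
noncomputable def dH {D : ℕ} (x y : Fin D → ℝ) : ℝ :=
  Real.log ((⨆ i, x i / y i) / ⨅ i, x i / y i)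

section aux

variable {D : ℕ}

lemma mulVec_pos' {A : Matrix (Fin D) (Fin D) ℝ} {u : Fin D → ℝ}
    [Nonempty (Fin D)] (hA : ∀ i j, 0 < A i j) (hu : ∀ i, 0 < u i) (i : Fin D) :
    0 < A.mulVec u i := by
  unfold Matrix.mulVec dotProduct
  exact Finset.sum_pos (fun j _ => mul_pos (hA i j) (hu j)) Finset.univ_nonempty

lemma dH_le_aux [Nonempty (Fin D)] (A : Matrix (Fin D) (Fin D) ℝ)
    (hA : ∀ i j, 0 < A i j) (u v : Fin D → ℝ) (hu : ∀ i, 0 < u i) (hv : ∀ i, 0 < v i) :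
    dH (A.mulVec u) (A.mulVec v) ≤
      ⨆ t : Fin D × Fin D × Fin D × Fin D,
        Real.log ((A t.1 t.2.1 * A t.2.2.1 t.2.2.2) / (A t.1 t.2.2.2 * A t.2.2.1 t.2.1)) := by
  set F : Fin D × Fin D × Fin D × Fin D → ℝ := fun t =>
    Real.log ((A t.1 t.2.1 * A t.2.2.1 t.2.2.2) / (A t.1 t.2.2.2 * A t.2.2.1 t.2.1)) with hF
  set x := A.mulVec u with hx
  set y := A.mulVec v with hy
  have hxp : ∀ i, 0 < x i := mulVec_pos' hA hu
  have hyp : ∀ i, 0 < y i := mulVec_pos' hA hv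
  obtain ⟨i0, hi0⟩ := exists_eq_ciSup_of_finite (f := fun i => x i / y i)
  obtain ⟨p0, hp0⟩ := exists_eq_ciInf_of_finite (f := fun i => x i / y i)
  obtain ⟨⟨j0, q0⟩, hjq⟩ := Finite.exists_max (fun m : Fin D × Fin D =>
    A i0 m.1 * A p0 m.2 / (A i0 m.2 * A p0 m.1))
  set M := A i0 j0 * A p0 q0 / (A i0 q0 * A p0 j0) with hM
  have hMpos : 0 < M := div_pos (mul_pos (hA _ _) (hA _ _)) (mul_pos (hA _ _) (hA _ _))
  have key : x i0 * y p0 ≤ M * (y i0 * x p0) := by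
    have expand1 : x i0 * y p0 = ∑ j, ∑ q, (A i0 j * u j) * (A p0 q * v q) := by
      rw [hx, hy]; unfold Matrix.mulVec dotProduct
      rw [Finset.sum_mul_sum]
    have expand2 : y i0 * x p0 = ∑ j, ∑ q, (A i0 q * v q) * (A p0 j * u j) := by
      rw [hx, hy]; unfold Matrix.mulVec dotProduct
      rw [Finset.sum_mul_sum]
      rw [Finset.sum_comm]
    rw [expand1, expand2, Finset.mul_sum]
    refine Finset.sum_le_sum fun j _ => ?_
    rw [Finset.mul_sum]
    refine Finset.sum_le_sum fun q _ => ?_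
    have h1 : A i0 j * A p0 q ≤ M * (A i0 q * A p0 j) := by
      have := hjq (j, q)
      rwa [div_le_iff₀ (mul_pos (hA _ _) (hA _ _))] at this
    calc (A i0 j * u j) * (A p0 q * v q) = (A i0 j * A p0 q) * (u j * v q) := by ring
      _ ≤ (M * (A i0 q * A p0 j)) * (u j * v q) :=
          mul_le_mul_of_nonneg_right h1 (mul_nonneg (hu j).le (hv q).le)
      _ = M * ((A i0 q * v q) * (A p0 j * u j)) := by ring
  have hratio : (x i0 / y i0) / (x p0 / y p0) ≤ M := by
    have h1 : (x i0 / y i0) / (x p0 / y p0) = (x i0 * y p0) / (y i0 * x p0) := by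
      field_simp
    rw [h1, div_le_iff₀ (mul_pos (hyp i0) (hxp p0))]
    exact key
  have hratiopos : 0 < (x i0 / y i0) / (x p0 / y p0) :=
    div_pos (div_pos (hxp i0) (hyp i0)) (div_pos (hxp p0) (hyp p0))
  have hdH : dH x y = Real.log ((x i0 / y i0) / (x p0 / y p0)) := by
    rw [dH, ← hi0, ← hp0]
  rw [hdH]
  calc Real.log ((x i0 / y i0) / (x p0 / y p0)) ≤ Real.log M :=
        Real.log_le_log hratiopos hratio
    _ = F (i0, j0, p0, q0) := rfl
    _ ≤ ⨆ t, F t := le_ciSup (Set.Finite.bddAbove (Set.finite_range F)) _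

end aux

theorem projective_diameter_formula
    (D : ℕ) (hD : 1 ≤ D) (A : Matrix (Fin D) (Fin D) ℝ)
    (hA : ∀ i j, 0 < A i j) :
    BddAbove {d : ℝ | ∃ u v : Fin D → ℝ, (∀ i, 0 < u i) ∧ (∀ i, 0 < v i) ∧
      d = dH (A.mulVec u) (A.mulVec v)} ∧
    sSup {d : ℝ | ∃ u v : Fin D → ℝ, (∀ i, 0 < u i) ∧ (∀ i, 0 < v i) ∧
      d = dH (A.mulVec u) (A.mulVec v)} =
      ⨆ t : Fin D × Fin D × Fin D × Fin D,
        Real.log ((A t.1 t.2.1 * A t.2.2.1 t.2.2.2) / (A t.1 t.2.2.2 * A t.2.2.1 t.2.1)) := by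
  haveI : Nonempty (Fin D) := Fin.pos_iff_nonempty.mp hD
  set F : Fin D × Fin D × Fin D × Fin D → ℝ := fun t =>
    Real.log ((A t.1 t.2.1 * A t.2.2.1 t.2.2.2) / (A t.1 t.2.2.2 * A t.2.2.1 t.2.1)) with hF
  set S : Set ℝ := {d : ℝ | ∃ u v : Fin D → ℝ, (∀ i, 0 < u i) ∧ (∀ i, 0 < v i) ∧
      d = dH (A.mulVec u) (A.mulVec v)} with hS
  have hSub : ∀ d ∈ S, d ≤ ⨆ t, F t := by
    rintro d ⟨u, v, hu, hv, rfl⟩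
    exact dH_le_aux A hA u v hu hv
  have hbdd : BddAbove S := ⟨⨆ t, F t, hSub⟩
  refine ⟨hbdd, ?_⟩
  have hSne : S.Nonempty := by
    refine ⟨dH (A.mulVec 1) (A.mulVec 1), 1, 1, fun _ => one_pos, fun _ => one_pos, rfl⟩
  refine le_antisymm (csSup_le hSne hSub) ?_
  -- lower bound
  obtain ⟨⟨i0, j0, p0, q0⟩, ht0⟩ := exists_eq_ciSup_of_finite (f := F)
  rw [← ht0]
  set uδ : ℝ → Fin D → ℝ := fun δ k => (if k = j0 then 1 else 0) + δ with huδ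
  set vδ : ℝ → Fin D → ℝ := fun δ k => (if k = q0 then 1 else 0) + δ with hvδ
  have hupos : ∀ δ > 0, ∀ k, 0 < uδ δ k := by
    intro δ hδ k; rw [huδ]; dsimp only; positivity
  have hvpos : ∀ δ > 0, ∀ k, 0 < vδ δ k := by
    intro δ hδ k; rw [hvδ]; dsimp only; positivity
  set r : ℝ → ℝ := fun δ =>
    ((A.mulVec (uδ δ) i0) / (A.mulVec (vδ δ) i0)) /
      ((A.mulVec (uδ δ) p0) / (A.mulVec (vδ δ) p0)) with hr
  -- step 1: for δ > 0, log (r δ) ≤ sSup S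
  have step1 : ∀ δ ∈ Set.Ioi (0:ℝ), Real.log (r δ) ≤ sSup S := by
    intro δ hδ
    rw [Set.mem_Ioi] at hδ
    set x := A.mulVec (uδ δ) with hxd
    set y := A.mulVec (vδ δ) with hyd
    have hxp : ∀ i, 0 < x i := mulVec_pos' hA (hupos δ hδ)
    have hyp : ∀ i, 0 < y i := mulVec_pos' hA (hvpos δ hδ)
    have hmem : dH x y ∈ S := ⟨uδ δ, vδ δ, hupos δ hδ, hvpos δ hδ, rfl⟩
    have h2 : Real.log (r δ) ≤ dH x y := by
      rw [hr, dH]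
      dsimp only
      have hinfpos : 0 < ⨅ i, x i / y i := by
        obtain ⟨p1, hp1⟩ := exists_eq_ciInf_of_finite (f := fun i => x i / y i)
        rw [← hp1]; exact div_pos (hxp p1) (hyp p1)
      have hle1 : x i0 / y i0 ≤ ⨆ i, x i / y i :=
        le_ciSup (f := fun i => x i / y i) (Set.Finite.bddAbove (Set.finite_range _)) i0
      have hle2 : ⨅ i, x i / y i ≤ x p0 / y p0 :=
        ciInf_le (f := fun i => x i / y i) (Set.Finite.bddBelow (Set.finite_range _)) p0
      have hnum : 0 < x i0 / y i0 := div_pos (hxp i0) (hyp i0)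
      have := div_le_div₀ (le_trans hnum.le hle1) hle1 hinfpos hle2
      exact Real.log_le_log (div_pos hnum (div_pos (hxp p0) (hyp p0))) this
    exact h2.trans (le_csSup hbdd hmem)
  -- step 2: tendsto
  have step2 : Filter.Tendsto (fun δ => Real.log (r δ)) (nhdsWithin 0 (Set.Ioi 0))
      (nhds (F (i0, j0, p0, q0))) := by
    have hcomp : ∀ i j1 : Fin D, Filter.Tendsto
        (fun δ => A.mulVec (fun k => (if k = j1 then (1:ℝ) else 0) + δ) i)
        (nhdsWithin 0 (Set.Ioi 0)) (nhds (A i j1)) := by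
      intro i j1
      have heq : ∀ δ : ℝ, A.mulVec (fun k => (if k = j1 then (1:ℝ) else 0) + δ) i
          = A i j1 + δ * ∑ k, A i k := by
        intro δ
        unfold Matrix.mulVec dotProduct
        simp [mul_add, Finset.sum_add_distrib, Finset.mul_sum, mul_ite, mul_comm]
      simp only [heq]
      have : Filter.Tendsto (fun δ : ℝ => A i j1 + δ * ∑ k, A i k)
          (nhds 0) (nhds (A i j1)) := by
        have hc : Continuous (fun δ : ℝ => A i j1 + δ * ∑ k, A i k) := by fun_prop
        have h := hc.tendsto (0 : ℝ)
        simpa using h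
      exact this.mono_left nhdsWithin_le_nhds
    have h1 : Filter.Tendsto r (nhdsWithin 0 (Set.Ioi 0))
        (nhds ((A i0 j0 / A i0 q0) / (A p0 j0 / A p0 q0))) := by
      exact ((hcomp i0 j0).div (hcomp i0 q0) (hA i0 q0).ne').div
        ((hcomp p0 j0).div (hcomp p0 q0) (hA p0 q0).ne')
        (div_pos (hA p0 j0) (hA p0 q0)).ne'
    have hlim : (A i0 j0 / A i0 q0) / (A p0 j0 / A p0 q0)
        = A i0 j0 * A p0 q0 / (A i0 q0 * A p0 j0) := by
      field_simp
    rw [hlim] at h1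
    have := h1.log (div_pos (mul_pos (hA i0 j0) (hA p0 q0))
      (mul_pos (hA i0 q0) (hA p0 j0))).ne'
    exact this
  exact le_of_tendsto step2 (eventually_mem_nhdsWithin.mono step1)
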